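/- For any oriented graph G = (V, E), the multiplication rank satisfies ν(G) ≤ min(|V|², |E|) · min(|V|, |E| + 1). -/

import Mathlib

/-- An oriented graph: finite nonempty sets of vertices and edges with
origin and tail maps. -/
structure OrientedGraph where
  V : Type
  E : Type
  [fintypeV : Fintype V]
  [fintypeE : Fintype E]
  [nonemptyV : Nonempty V]
  [nonemptyE : Nonempty E]
  o : E → V
  t : E → V

attribute [instance] OrientedGraph.fintypeV OrientedGraph.fintypeE
  OrientedGraph.nonemptyV OrientedGraph.nonemptyE

namespace OrientedGraph

variable (G : OrientedGraph)

/-- `G.IsPath p u v` : the edge sequence `p` is a path from `u` to `v`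
(consecutive edges are composable; paths of length 0 at any vertex are allowed). -/
def IsPath (p : List G.E) (u v : G.V) : Prop :=
  List.Chain' (fun e f => G.t e = G.o f) p ∧
  ((p = [] ∧ u = v) ∨
    ∃ h : p ≠ [], u = G.o (p.head h) ∧ v = G.t (p.getLast h))

/-- The label of an edge sequence: the product of the labels of its edges
(the empty sequence maps to `1`). -/
def labelProd {M : Type} [Monoid M] (l : G.E → M) (s : List G.E) : M :=
  (s.map l).prod

/-- The diagram `(G, l)` is commutative: any two paths with the same origin and
the same tail have equal labels. -/
def IsCommutative {M : Type} [Monoid M] (l : G.E → M) : Prop :=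
  ∀ (u v : G.V) (p₁ p₂ : List G.E),
    G.IsPath p₁ u v → G.IsPath p₂ u v → G.labelProd l p₁ = G.labelProd l p₂

/-- A complete system of relations for `G`: for every monoid `M` and every
labeling `l : E → M`, the diagram `(G, l)` is commutative iff all relations hold. -/
def IsComplete (R : Finset (List G.E × List G.E)) : Prop :=
  ∀ (M : Type) [Monoid M], ∀ l : G.E → M,
    G.IsCommutative l ↔ ∀ r ∈ R, G.labelProd l r.1 = G.labelProd l r.2

/-- A minimal complete system of relations: no proper subset is complete. -/
def IsMinimalComplete (R : Finset (List G.E × List G.E)) : Prop :=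
  G.IsComplete R ∧ ∀ R' : Finset (List G.E × List G.E), R' ⊂ R → ¬ G.IsComplete R'

/-- The commutativity rank `η(G)`: the minimal cardinality of a complete
system of relations for `G`. -/
noncomputable def eta : ℕ :=
  sInf {n : ℕ | ∃ R : Finset (List G.E × List G.E), G.IsComplete R ∧ R.card = n}

/-- `S'` is obtained from `S` by one multiplication. -/
def MulStep (S S' : Set (List G.E)) : Prop :=
  ∃ s ∈ S, ∃ s' ∈ S, S' = S ∪ {s ++ s'}

/-- `G.mCost S S'` : the minimal number of multiplications needed to obtain `S'`
from `S` (`⊤` if impossible). -/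
noncomputable def mCost (S S' : Set (List G.E)) : ℕ∞ :=
  sInf {k : ℕ∞ | ∃ n : ℕ, k = n ∧ ∃ f : ℕ → Set (List G.E),
    f 0 = S ∧ f n = S' ∧ ∀ i < n, G.MulStep (f i) (f (i + 1))}

/-- `S_R`: the set of all edge sequences appearing in the relations of `R`. -/
def relSet (R : Finset (List G.E × List G.E)) : Set (List G.E) :=
  {s | ∃ r ∈ R, s = r.1 ∨ s = r.2}

/-- `ℰ`: the empty sequence together with all one-edge sequences. -/
def baseSet : Set (List G.E) :=
  {s | s = [] ∨ ∃ e : G.E, s = [e]}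

/-- `m(R)`: the minimal number of multiplications needed to build all sequences
appearing in `R`, starting from `ℰ`. -/
noncomputable def mRel (R : Finset (List G.E × List G.E)) : ℕ∞ :=
  sInf {k : ℕ∞ | ∃ S : Set (List G.E), G.relSet R ⊆ S ∧ k = G.mCost G.baseSet S}

/-- The multiplication rank `ν(G)`. -/
noncomputable def nu : ℕ∞ :=
  sInf {k : ℕ∞ | ∃ R : Finset (List G.E × List G.E), G.IsComplete R ∧ k = G.mRel R}

/-- A 4-tuple of edges `(a, b, c, d)` forms a rhomboid. -/
def IsRhomboid (r : G.E × G.E × G.E × G.E) : Prop :=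
  G.o r.1 = G.o r.2.2.1 ∧ G.t r.2.1 = G.t r.2.2.2 ∧
  G.t r.1 = G.o r.2.1 ∧ G.t r.2.2.1 = G.o r.2.2.2 ∧
  G.o r.1 ≠ G.t r.1 ∧ G.o r.1 ≠ G.o r.2.2.2 ∧ G.o r.1 ≠ G.t r.2.2.2 ∧
  G.t r.1 ≠ G.o r.2.2.2 ∧ G.t r.1 ≠ G.t r.2.2.2 ∧ G.o r.2.2.2 ≠ G.t r.2.2.2

/-- Two rhomboids `(a, b, c, d)` and `(a', b', c', d')` are disjoint. -/
def RhDisjoint (r r' : G.E × G.E × G.E × G.E) : Prop :=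
  (r.1 ≠ r'.1 ∨ r.2.1 ≠ r'.2.1) ∧
  (r.1 ≠ r'.2.2.1 ∨ r.2.1 ≠ r'.2.2.2) ∧
  (r.2.2.1 ≠ r'.2.2.1 ∨ r.2.2.2 ≠ r'.2.2.2) ∧
  (r.2.2.1 ≠ r'.1 ∨ r.2.2.2 ≠ r'.2.1)

/-- `𝔯𝔥(G)`: the maximal cardinality of a family of pairwise disjoint rhomboids in `G`. -/
noncomputable def rhNum : ℕ :=
  sSup {n : ℕ | ∃ F : Finset (G.E × G.E × G.E × G.E),
    (∀ r ∈ F, G.IsRhomboid r) ∧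
    (∀ r ∈ F, ∀ r' ∈ F, r ≠ r' → G.RhDisjoint r r') ∧ F.card = n}

/-- `𝔏(G)`: the number of loops of `G`. -/
noncomputable def loopCount : ℕ :=
  Nat.card {e : G.E // G.o e = G.t e}

/-- `G` is quasi-acyclic: no directed cycle visiting two or more distinct vertices. -/
def QuasiAcyclic : Prop :=
  ∀ u v : G.V, u ≠ v →
    ∀ p q : List G.E, G.IsPath p u v → G.IsPath q v u → False

/-- `G` is 2-path-bounded: every oriented path avoiding loop edges has length at most 2. -/
def TwoPathBounded : Prop :=
  ∀ (p : List G.E) (u v : G.V), G.IsPath p u v →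
    (∀ e ∈ p, G.o e ≠ G.t e) → p.length ≤ 2

/-- `G` has a pair of multiple edges. -/
def HasMultipleEdges : Prop :=
  ∃ e e' : G.E, e ≠ e' ∧ G.t e = G.t e' ∧ G.o e = G.o e' ∧ G.t e ≠ G.o e

/-- `G` has a triangle. -/
def HasTriangle : Prop :=
  ∃ a b c : G.E, G.o a = G.o b ∧ G.t b = G.o c ∧ G.t c = G.t a ∧
    G.o a ≠ G.t a ∧ G.o b ≠ G.t b ∧ G.o c ≠ G.t c

/-- `G` has no loops. -/
def NoLoops : Prop := ∀ e : G.E, G.o e ≠ G.t e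

/-- Every edge occurring on either side of the relation `r` is a loop. -/
def AllLoops (r : List G.E × List G.E) : Prop :=
  (∀ e ∈ r.1, G.o e = G.t e) ∧ (∀ e ∈ r.2, G.o e = G.t e)

/-- Both sides of the relation `r` contain at least one non-loop edge. -/
def BothSidesNonLoop (r : List G.E × List G.E) : Prop :=
  (∃ e ∈ r.1, G.o e ≠ G.t e) ∧ (∃ e ∈ r.2, G.o e ≠ G.t e)

end OrientedGraph

/-- The triploid `T(n₁, n₂, n₃, n₀, e)`. -/
def Triploid (n₁ n₂ n₃ n₀ e : ℕ) (hn₁ : 0 < n₁) (he : n₂ * (n₁ + n₃) ≤ e)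
    (he₀ : 0 < e) : OrientedGraph where
  V := Fin n₀ ⊕ Fin n₁ ⊕ Fin n₂ ⊕ Fin n₃
  E := (Fin n₁ × Fin n₂) ⊕ (Fin n₂ × Fin n₃) ⊕ Fin (e - n₂ * (n₁ + n₃))
  nonemptyV := ⟨Sum.inr (Sum.inl ⟨0, hn₁⟩)⟩
  nonemptyE := by
    by_cases h : n₂ * (n₁ + n₃) < e
    · exact ⟨Sum.inr (Sum.inr ⟨0, by omega⟩)⟩
    · have h2 : 0 < n₂ := by
        rcases Nat.eq_zero_or_pos n₂ with h0 | h0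
        · exfalso; subst h0; simp at h; omega
        · exact h0
      exact ⟨Sum.inl (⟨0, hn₁⟩, ⟨0, h2⟩)⟩
  o := Sum.elim (fun p => Sum.inr (Sum.inl p.1))
        (Sum.elim (fun p => Sum.inr (Sum.inr (Sum.inl p.1)))
          (fun _ => Sum.inr (Sum.inl ⟨0, hn₁⟩)))
  t := Sum.elim (fun p => Sum.inr (Sum.inr (Sum.inl p.2)))
        (Sum.elim (fun p => Sum.inr (Sum.inr (Sum.inr p.2)))
          (fun _ => Sum.inr (Sum.inl ⟨0, hn₁⟩)))


/-! ### Auxiliary development for the upper bound -/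

namespace OrientedGraph

open Classical

variable (G : OrientedGraph)

lemma isPath_nil_iff (u v : G.V) : G.IsPath [] u v ↔ u = v := by
  constructor
  · rintro ⟨-, h | ⟨h, -⟩⟩
    · exact h.2
    · exact absurd rfl h
  · rintro rfl; exact ⟨List.isChain_nil, Or.inl ⟨rfl, rfl⟩⟩

lemma isPath_cons_iff (e : G.E) (q : List G.E) (u v : G.V) :
    G.IsPath (e :: q) u v ↔ G.o e = u ∧ G.IsPath q (G.t e) v := by
  constructor
  · rintro ⟨hc, h | ⟨h, hu, hv⟩⟩
    · exact absurd h.1 (by simp)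
    · cases q with
      | nil =>
        refine ⟨hu.symm, ?_⟩
        rw [G.isPath_nil_iff]
        exact (by simpa using hv : v = G.t e).symm
      | cons f r =>
        refine ⟨hu.symm, (List.isChain_cons_cons.mp hc).2, Or.inr ⟨by simp, ?_, ?_⟩⟩
        · simpa using (List.isChain_cons_cons.mp hc).1
        · simpa using hv
  · rintro ⟨he, hq⟩
    cases q with
    | nil =>
      rw [G.isPath_nil_iff] at hq
      exact ⟨List.isChain_singleton e, Or.inr ⟨by simp, by simp [he], by simp [hq]⟩⟩
    | cons f r =>
      obtain ⟨hc, h | ⟨h, hu, hv⟩⟩ := hq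
      · exact absurd h.1 (by simp)
      · refine ⟨List.isChain_cons_cons.mpr ⟨by simpa using hu, hc⟩,
          Or.inr ⟨by simp, by simp [he], ?_⟩⟩
        simpa using hv

lemma isPath_singleton (e : G.E) : G.IsPath [e] (G.o e) (G.t e) := by
  rw [G.isPath_cons_iff]
  exact ⟨rfl, (G.isPath_nil_iff _ _).mpr rfl⟩

lemma isPath_append {p q : List G.E} {u v w : G.V}
    (hp : G.IsPath p u v) (hq : G.IsPath q v w) : G.IsPath (p ++ q) u w := by
  induction p generalizing u with
  | nil =>
    rw [G.isPath_nil_iff] at hp; subst hp; simpa using hq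
  | cons e r ih =>
    rw [G.isPath_cons_iff] at hp
    rw [List.cons_append, G.isPath_cons_iff]
    exact ⟨hp.1, ih hp.2⟩

lemma isPath_getLast {p : List G.E} {u v : G.V} (hp : G.IsPath p u v) (h : p ≠ []) :
    G.t (p.getLast h) = v := by
  obtain ⟨-, h' | ⟨h', -, hv⟩⟩ := hp
  · exact absurd h'.1 h
  · exact hv.symm

/-- Reachability by an oriented path. -/
def Reach (u v : G.V) : Prop := ∃ p, G.IsPath p u v

lemma reach_refl (u : G.V) : G.Reach u u := ⟨[], (G.isPath_nil_iff u u).mpr rfl⟩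

/-- Distance: minimal length of a path. -/
noncomputable def dist (u v : G.V) : ℕ :=
  sInf {k | ∃ p, G.IsPath p u v ∧ p.length = k}

lemma exists_minPath {u v : G.V} (h : G.Reach u v) :
    ∃ p, G.IsPath p u v ∧ p.length = G.dist u v := by
  have hne : {k | ∃ p, G.IsPath p u v ∧ p.length = k}.Nonempty := by
    obtain ⟨p, hp⟩ := h
    exact ⟨p.length, p, hp, rfl⟩
  exact Nat.sInf_mem hne

lemma dist_le {u v : G.V} {p : List G.E} (hp : G.IsPath p u v) :
    G.dist u v ≤ p.length :=
  Nat.sInf_le ⟨p, hp, rfl⟩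

lemma dist_self (u : G.V) : G.dist u u = 0 :=
  Nat.le_zero.mp (G.dist_le ((G.isPath_nil_iff u u).mpr rfl))

lemma eq_of_dist_eq_zero {u v : G.V} (h : G.Reach u v) (hd : G.dist u v = 0) :
    u = v := by
  obtain ⟨p, hp, hl⟩ := G.exists_minPath h
  rw [hd, List.length_eq_zero_iff] at hl
  subst hl
  exact (G.isPath_nil_iff u v).mp hp

/-- The canonical representative edge with given origin and tail (if one exists). -/
noncomputable def repEdge (u v : G.V) : G.E :=
  if h : ∃ e, G.o e = u ∧ G.t e = v then h.choose else Classical.arbitrary G.E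

lemma repEdge_spec {u v : G.V} (h : ∃ e, G.o e = u ∧ G.t e = v) :
    G.o (G.repEdge u v) = u ∧ G.t (G.repEdge u v) = v := by
  rw [repEdge, dif_pos h]
  exact h.choose_spec

/-- An edge is representative if it is the canonical edge for its endpoints. -/
def IsRep (e : G.E) : Prop := G.repEdge (G.o e) (G.t e) = e

lemma isRep_repEdge {u v : G.V} (h : ∃ e, G.o e = u ∧ G.t e = v) :
    G.IsRep (G.repEdge u v) := by
  obtain ⟨h1, h2⟩ := G.repEdge_spec h
  unfold IsRep
  rw [h1, h2]

/-- The next vertex on a canonical geodesic from `u` to `v`. -/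
noncomputable def nxt (u v : G.V) : G.V :=
  if h : ∃ w, (∃ e, G.o e = u ∧ G.t e = w) ∧ G.Reach w v ∧ G.dist w v < G.dist u v
  then h.choose else v

lemma nxt_spec {u v : G.V} (hne : u ≠ v) (h : G.Reach u v) :
    (∃ e, G.o e = u ∧ G.t e = G.nxt u v) ∧ G.Reach (G.nxt u v) v ∧
      G.dist (G.nxt u v) v < G.dist u v := by
  have hex : ∃ w, (∃ e, G.o e = u ∧ G.t e = w) ∧ G.Reach w v ∧ G.dist w v < G.dist u v := by
    obtain ⟨p, hp, hl⟩ := G.exists_minPath h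
    cases p with
    | nil => exact absurd ((G.isPath_nil_iff u v).mp hp) hne
    | cons e q =>
      rw [G.isPath_cons_iff] at hp
      refine ⟨G.t e, ⟨e, hp.1, rfl⟩, ⟨q, hp.2⟩, ?_⟩
      have := G.dist_le hp.2
      simp only [List.length_cons] at hl
      omega
  rw [nxt, dif_pos hex]
  exact hex.choose_spec

lemma dist_nxt {u v : G.V} (hne : u ≠ v) (h : G.Reach u v) :
    G.dist u v = G.dist (G.nxt u v) v + 1 := by
  obtain ⟨⟨e, he1, he2⟩, hr, hlt⟩ := G.nxt_spec hne h
  obtain ⟨p, hp, hl⟩ := G.exists_minPath hr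
  have : G.dist u v ≤ G.dist (G.nxt u v) v + 1 := by
    have hpath : G.IsPath (e :: p) u v := by
      rw [G.isPath_cons_iff]
      exact ⟨he1, he2 ▸ hp⟩
    have := G.dist_le hpath
    simp only [List.length_cons, hl] at this
    omega
  omega

/-- The canonical path from `u` to `v`. -/
noncomputable def canon (u v : G.V) : List G.E :=
  if h : u ≠ v ∧ G.Reach u v then
    G.repEdge u (G.nxt u v) :: canon (G.nxt u v) v
  else []
termination_by G.dist u v
decreasing_by exact (G.nxt_spec h.1 h.2).2.2

lemma canon_self (u : G.V) : G.canon u u = [] := by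
  rw [canon, dif_neg]; simp

lemma canon_cons {u v : G.V} (hne : u ≠ v) (h : G.Reach u v) :
    G.canon u v = G.repEdge u (G.nxt u v) :: G.canon (G.nxt u v) v := by
  rw [canon, dif_pos ⟨hne, h⟩]

lemma canon_spec {u v : G.V} (h : G.Reach u v) :
    G.IsPath (G.canon u v) u v ∧ (G.canon u v).length = G.dist u v ∧
      ∀ e ∈ G.canon u v, G.IsRep e := by
  obtain ⟨k, hk⟩ : ∃ k, G.dist u v ≤ k := ⟨G.dist u v, le_refl _⟩
  induction k generalizing u with
  | zero =>
    have : u = v := G.eq_of_dist_eq_zero h (Nat.le_zero.mp hk)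
    subst this
    rw [G.canon_self]
    exact ⟨(G.isPath_nil_iff u u).mpr rfl, by simp [G.dist_self], by simp⟩
  | succ k ih =>
    by_cases hne : u = v
    · subst hne
      rw [G.canon_self]
      exact ⟨(G.isPath_nil_iff u u).mpr rfl, by simp [G.dist_self], by simp⟩
    · obtain ⟨hex, hr, hlt⟩ := G.nxt_spec hne h
      have hd := G.dist_nxt hne h
      obtain ⟨ihp, ihl, ihr⟩ := ih hr (by omega)
      obtain ⟨ho, ht⟩ := G.repEdge_spec hex
      rw [G.canon_cons hne h]
      refine ⟨?_, ?_, ?_⟩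
      · rw [G.isPath_cons_iff]
        refine ⟨ho, ?_⟩
        rw [ht]
        exact ihp
      · simp [ihl, hd]
      · intro e he
        rcases List.mem_cons.mp he with rfl | he
        · exact G.isRep_repEdge hex
        · exact ihr e he

lemma canon_isPath {u v : G.V} (h : G.Reach u v) : G.IsPath (G.canon u v) u v :=
  (G.canon_spec h).1

lemma canon_length {u v : G.V} (h : G.Reach u v) :
    (G.canon u v).length = G.dist u v := (G.canon_spec h).2.1

end OrientedGraph


namespace OrientedGraph

open scoped Classical

variable (G : OrientedGraph)

lemma labelProd_cons {M : Type} [Monoid M] (l : G.E → M) (e : G.E) (s : List G.E) :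
    G.labelProd l (e :: s) = l e * G.labelProd l s := by simp [labelProd]

lemma labelProd_append {M : Type} [Monoid M] (l : G.E → M) (s s' : List G.E) :
    G.labelProd l (s ++ s') = G.labelProd l s * G.labelProd l s' := by simp [labelProd]

/-- The first relation family: every edge is related to its representative. -/
noncomputable def relFam1 : Finset (List G.E × List G.E) :=
  Finset.univ.image fun e => ([e], [G.repEdge (G.o e) (G.t e)])

/-- Pairs indexing the second relation family. -/
def GoodPair (ev : G.E × G.V) : Prop := G.IsRep ev.1 ∧ G.Reach (G.t ev.1) ev.2

/-- The second relation family. -/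
noncomputable def relFam2 : Finset (List G.E × List G.E) :=
  (Finset.univ.filter fun ev : G.E × G.V => G.GoodPair ev).image
    fun ev => ([ev.1] ++ G.canon (G.t ev.1) ev.2, G.canon (G.o ev.1) ev.2)

/-- The complete system of relations used for the upper bound. -/
noncomputable def mySystem : Finset (List G.E × List G.E) := G.relFam1 ∪ G.relFam2

lemma mySystem_complete : G.IsComplete G.mySystem := by
  intro M _ l
  constructor
  · intro hcomm r hr
    rcases Finset.mem_union.mp hr with hr | hr
    · obtain ⟨e, -, he⟩ := Finset.mem_image.mp hr
      subst he
      have hex : ∃ f, G.o f = G.o e ∧ G.t f = G.t e := ⟨e, rfl, rfl⟩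
      obtain ⟨ho, ht⟩ := G.repEdge_spec hex
      have hpath : G.IsPath [G.repEdge (G.o e) (G.t e)] (G.o e) (G.t e) := by
        have := G.isPath_singleton (G.repEdge (G.o e) (G.t e))
        rwa [ho, ht] at this
      exact hcomm (G.o e) (G.t e) _ _ (G.isPath_singleton e) hpath
    · obtain ⟨ev, hev, he⟩ := Finset.mem_image.mp hr
      obtain ⟨-, hreach⟩ := (Finset.mem_filter.mp hev).2
      subst he
      have hleft : G.IsPath ([ev.1] ++ G.canon (G.t ev.1) ev.2) (G.o ev.1) ev.2 :=
        G.isPath_append (G.isPath_singleton ev.1) (G.canon_isPath hreach)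
      have hright : G.IsPath (G.canon (G.o ev.1) ev.2) (G.o ev.1) ev.2 :=
        G.canon_isPath ⟨_, hleft⟩
      exact hcomm _ _ _ _ hleft hright
  · intro hrel u v p₁ p₂ hp₁ hp₂
    have key : ∀ (p : List G.E) (u v : G.V), G.IsPath p u v →
        G.labelProd l p = G.labelProd l (G.canon u v) := by
      intro p
      induction p with
      | nil =>
        intro u v hp
        rw [G.isPath_nil_iff] at hp
        subst hp
        rw [G.canon_self]
      | cons e q ih =>
        intro u v hp
        rw [G.isPath_cons_iff] at hp
        obtain ⟨ho, hq⟩ := hp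
        subst ho
        have hf₀ : ∀ x : G.E, x = x := fun _ => rfl
        let f₀ := G.repEdge (G.o e) (G.t e)
        have hex : ∃ f, G.o f = G.o e ∧ G.t f = G.t e := ⟨e, rfl, rfl⟩
        obtain ⟨hf₀o, hf₀t⟩ := G.repEdge_spec hex
        have h1 : l e = l f₀ := by
          have := hrel ([e], [f₀]) (Finset.mem_union_left _
            (Finset.mem_image.mpr ⟨e, Finset.mem_univ e, rfl⟩))
          simpa [labelProd] using this
        have hreach : G.Reach (G.t f₀) v := by rw [hf₀t]; exact ⟨q, hq⟩
        have hgood : G.GoodPair (f₀, v) := ⟨G.isRep_repEdge hex, hreach⟩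
        have h2 := hrel ([f₀] ++ G.canon (G.t f₀) v, G.canon (G.o f₀) v)
          (Finset.mem_union_right _ (Finset.mem_image.mpr
            ⟨(f₀, v), Finset.mem_filter.mpr ⟨Finset.mem_univ _, hgood⟩, rfl⟩))
        have h3 : G.labelProd l [f₀] = l f₀ := by simp [labelProd]
        rw [G.labelProd_cons, ih _ _ hq, h1]
        rw [G.labelProd_append, h3, hf₀t] at h2
        rw [h2, hf₀o]
    exact (key p₁ u v hp₁).trans (key p₂ u v hp₂).symm

/-- Pairs indexing the multiplication steps. -/
def BuildPair (ev : G.E × G.V) : Prop :=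
  G.IsRep ev.1 ∧ G.Reach (G.t ev.1) ev.2 ∧ ev.2 ≠ G.t ev.1

noncomputable def buildPairs : Finset (G.E × G.V) :=
  Finset.univ.filter fun ev => G.BuildPair ev

noncomputable def buildKey (ev : G.E × G.V) : ℕ := G.dist (G.t ev.1) ev.2

noncomputable def bKeyLe : (G.E × G.V) → (G.E × G.V) → Prop :=
  fun a b => G.buildKey a ≤ G.buildKey b

noncomputable instance : DecidableRel G.bKeyLe :=
  fun a b => inferInstanceAs (Decidable (_ ≤ _))

instance : IsTotal (G.E × G.V) G.bKeyLe := ⟨fun a b => le_total _ _⟩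

instance : IsTrans (G.E × G.V) G.bKeyLe := ⟨fun _ _ _ h h' => le_trans h h'⟩

noncomputable def buildList : List (G.E × G.V) :=
  List.insertionSort G.bKeyLe G.buildPairs.toList

lemma mem_buildList {ev : G.E × G.V} : ev ∈ G.buildList ↔ G.BuildPair ev := by
  rw [buildList, (List.perm_insertionSort G.bKeyLe _).mem_iff, Finset.mem_toList,
    buildPairs, Finset.mem_filter]
  simp

lemma buildList_sorted : List.Pairwise G.bKeyLe G.buildList :=
  List.pairwise_insertionSort G.bKeyLe _

noncomputable def opList : List (List G.E) :=
  G.buildList.map fun ev => [ev.1] ++ G.canon (G.t ev.1) ev.2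

/-- The final stock of sequences. -/
def Sfin : Set (List G.E) := G.baseSet ∪ {x | x ∈ G.opList}

lemma dist_pos {u v : G.V} (h : G.Reach u v) (hne : u ≠ v) : 0 < G.dist u v := by
  rcases Nat.eq_zero_or_pos (G.dist u v) with h0 | h0
  · exact absurd (G.eq_of_dist_eq_zero h h0) hne
  · exact h0

/-- Key lemma: the canonical path needed at step `i` is already available. -/
lemma canon_prereq {i : ℕ} (hi : i < G.buildList.length) :
    G.canon (G.t (G.buildList[i].1)) (G.buildList[i].2) ∈
      G.baseSet ∪ {x | x ∈ G.opList.take i} := by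
  have hmem : G.buildList[i] ∈ G.buildList := List.getElem_mem _
  obtain ⟨hrep, hreach, hne⟩ := G.mem_buildList.mp hmem
  have hne' : G.t (G.buildList[i].1) ≠ G.buildList[i].2 := fun h => hne h.symm
  have hd := G.dist_pos hreach hne'
  obtain ⟨hexw, hreachw, -⟩ := G.nxt_spec hne' hreach
  have hdw := G.dist_nxt hne' hreach
  have hcons := G.canon_cons hne' hreach
  obtain ⟨hro, hrt⟩ := G.repEdge_spec hexw
  by_cases hwv : G.nxt (G.t (G.buildList[i].1)) (G.buildList[i].2) = G.buildList[i].2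
  · -- canonical path has length 1
    have h0 : G.canon (G.nxt (G.t (G.buildList[i].1)) (G.buildList[i].2))
        (G.buildList[i].2) = [] := by rw [hwv, G.canon_self]
    exact Or.inl (Or.inr ⟨_, by rw [hcons, h0]⟩)
  · -- the canonical path is the result of an earlier operation
    right
    have hbp' : G.BuildPair (G.repEdge (G.t (G.buildList[i].1))
        (G.nxt (G.t (G.buildList[i].1)) (G.buildList[i].2)), G.buildList[i].2) := by
      refine ⟨G.isRep_repEdge hexw, ?_, ?_⟩
      · simpa [hrt] using hreachw
      · simpa [hrt] using fun h => hwv h.symm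
    have hmem' := G.mem_buildList.mpr hbp'
    obtain ⟨j, hj, hget⟩ := List.mem_iff_getElem.mp hmem'
    have hkey' : G.buildKey (G.repEdge (G.t (G.buildList[i].1))
        (G.nxt (G.t (G.buildList[i].1)) (G.buildList[i].2)), G.buildList[i].2) =
        G.dist (G.nxt (G.t (G.buildList[i].1)) (G.buildList[i].2)) (G.buildList[i].2) := by
      simp only [buildKey, hrt]
    have hkey : G.buildKey G.buildList[i] =
        G.dist (G.t (G.buildList[i].1)) (G.buildList[i].2) := rfl
    have hji : j < i := by
      rcases lt_trichotomy j i with h | h | h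
      · exact h
      · exfalso
        subst h
        have := congrArg G.buildKey hget
        rw [hkey, hkey'] at this
        omega
      · exfalso
        have hsorted := List.pairwise_iff_getElem.mp G.buildList_sorted i j hi hj h
        rw [hget] at hsorted
        have : G.buildKey G.buildList[i] ≤ G.buildKey _ := hsorted
        rw [hkey, hkey'] at this
        omega
    have hjlen : j < G.opList.length := by
      rw [opList, List.length_map]; exact hj
    have hop : G.opList[j]'hjlen = G.canon (G.t (G.buildList[i].1)) (G.buildList[i].2) := by
      simp only [opList, List.getElem_map]
      rw [hget]
      simp only [hrt]
      rw [hcons]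
      rfl
    have hjlen' : j < (G.opList.take i).length := by
      rw [List.length_take]
      omega
    refine Set.mem_setOf_eq ▸ ?_
    have : (G.opList.take i)[j]'hjlen' = G.canon (G.t (G.buildList[i].1)) (G.buildList[i].2) := by
      rw [List.getElem_take]
      exact hop
    rw [← this]
    exact List.getElem_mem _

lemma mCost_le : G.mCost G.baseSet G.Sfin ≤ (G.opList.length : ℕ∞) := by
  apply sInf_le
  refine ⟨G.opList.length, rfl, fun i => G.baseSet ∪ {x | x ∈ G.opList.take i}, ?_, ?_, ?_⟩
  · show G.baseSet ∪ {x | x ∈ G.opList.take 0} = G.baseSet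
    simp
  · show G.baseSet ∪ {x | x ∈ G.opList.take G.opList.length} = G.Sfin
    rw [List.take_length]
    rfl
  · intro i hi
    rw [opList, List.length_map] at hi
    set ev := G.buildList[i] with hev
    refine ⟨[ev.1], Or.inl (Or.inr ⟨ev.1, rfl⟩), G.canon (G.t ev.1) ev.2,
      G.canon_prereq hi, ?_⟩
    ext x
    simp only [Set.mem_union, Set.mem_setOf_eq, Set.mem_singleton_iff]
    have htake : G.opList.take (i + 1) = G.opList.take i ++
        [[ev.1] ++ G.canon (G.t ev.1) ev.2] := by
      have hi' : i < G.opList.length := by rw [opList, List.length_map]; exact hi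
      rw [List.take_succ, List.getElem?_eq_getElem hi']
      simp [opList, List.getElem_map, ← hev]
    rw [htake]
    simp only [List.mem_append, List.mem_singleton]
    tauto

lemma canon_mem_Sfin {u v : G.V} (h : G.Reach u v) : G.canon u v ∈ G.Sfin := by
  by_cases hne : u = v
  · subst hne; rw [G.canon_self]; exact Or.inl (Or.inl rfl)
  · obtain ⟨hexw, hreachw, -⟩ := G.nxt_spec hne h
    obtain ⟨hro, hrt⟩ := G.repEdge_spec hexw
    rw [G.canon_cons hne h]
    by_cases hwv : G.nxt u v = v
    · left
      right
      have h0 : G.canon (G.nxt u v) v = [] := by rw [hwv, G.canon_self]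
      exact ⟨G.repEdge u (G.nxt u v), by rw [h0]⟩
    · right
      have hbp : G.BuildPair (G.repEdge u (G.nxt u v), v) := by
        refine ⟨G.isRep_repEdge hexw, ?_, ?_⟩
        · simpa [hrt] using hreachw
        · simpa [hrt] using fun hh => hwv hh.symm
      show _ ∈ G.opList
      simp only [opList]
      refine List.mem_map.mpr ⟨(G.repEdge u (G.nxt u v), v), G.mem_buildList.mpr hbp, ?_⟩
      simp only [hrt]
      rfl

lemma relSet_subset : G.relSet G.mySystem ⊆ G.Sfin := by
  rintro s ⟨r, hr, hs⟩
  rcases Finset.mem_union.mp hr with hr | hr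
  · obtain ⟨e, -, he⟩ := Finset.mem_image.mp hr
    subst he
    rcases hs with hs | hs <;> subst hs
    · exact Or.inl (Or.inr ⟨e, rfl⟩)
    · exact Or.inl (Or.inr ⟨_, rfl⟩)
  · obtain ⟨ev, hev, he⟩ := Finset.mem_image.mp hr
    obtain ⟨hrep, hreach⟩ := (Finset.mem_filter.mp hev).2
    subst he
    rcases hs with hs | hs <;> subst hs
    · by_cases hne : ev.2 = G.t ev.1
      · have h0 : G.canon (G.t ev.1) ev.2 = [] := by rw [hne, G.canon_self]
        exact Or.inl (Or.inr ⟨ev.1, by simp [h0]⟩)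
      · right
        rw [opList]
        exact List.mem_map.mpr ⟨ev, G.mem_buildList.mpr ⟨hrep, hreach, hne⟩, rfl⟩
    · refine G.canon_mem_Sfin ⟨[ev.1] ++ G.canon (G.t ev.1) ev.2, ?_⟩
      exact G.isPath_append (G.isPath_singleton ev.1) (G.canon_isPath hreach)

/-- Counting the representative edges. -/
noncomputable def reps : Finset G.E := Finset.univ.filter fun e => G.IsRep e

lemma reps_card_le : G.reps.card ≤ min (Fintype.card G.V ^ 2) (Fintype.card G.E) := by
  refine le_min ?_ ?_
  · have : G.reps.card ≤ (Finset.univ : Finset (G.V × G.V)).card := by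
      refine Finset.card_le_card_of_injOn (fun e => (G.o e, G.t e))
        (fun e _ => Finset.mem_univ _) ?_
      intro e he e' he' hee
      have hre : G.IsRep e := (Finset.mem_filter.mp he).2
      have hre' : G.IsRep e' := (Finset.mem_filter.mp he').2
      simp only [Prod.mk.injEq] at hee
      rw [← hre, ← hre', hee.1, hee.2]
    simpa [Fintype.card_prod, sq] using this
  · simpa [reps] using Finset.card_filter_le Finset.univ fun e => G.IsRep e

lemma canon_ne_nil {u v : G.V} (h : G.Reach u v) (hne : u ≠ v) : G.canon u v ≠ [] := by
  intro hnil
  have h1 := G.canon_length h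
  rw [hnil] at h1
  simp only [List.length_nil] at h1
  have h2 := G.dist_pos h hne
  omega

lemma buildPairs_card_le :
    G.buildPairs.card ≤ G.reps.card * min (Fintype.card G.V) (Fintype.card G.E + 1) := by
  rcases le_total (Fintype.card G.V) (Fintype.card G.E + 1) with hm | hm
  · rw [min_eq_left hm]
    have : G.buildPairs ⊆ G.reps ×ˢ Finset.univ := by
      rintro ⟨e, v⟩ hev
      obtain ⟨hrep, -, -⟩ := (Finset.mem_filter.mp hev).2
      exact Finset.mem_product.mpr ⟨Finset.mem_filter.mpr ⟨Finset.mem_univ _, hrep⟩,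
        Finset.mem_univ _⟩
    simpa [Finset.card_product] using Finset.card_le_card this
  · rw [min_eq_right hm]
    have : G.buildPairs.card ≤ (G.reps ×ˢ (Finset.univ : Finset (Option G.E))).card := by
      refine Finset.card_le_card_of_injOn
        (fun ev => (ev.1, (G.canon (G.t ev.1) ev.2).getLast?)) ?_ ?_
      · rintro ⟨e, v⟩ hev
        obtain ⟨hrep, -, -⟩ := (Finset.mem_filter.mp hev).2
        exact Finset.mem_product.mpr ⟨Finset.mem_filter.mpr ⟨Finset.mem_univ _, hrep⟩,
          Finset.mem_univ _⟩
      · rintro ⟨e, v⟩ hev ⟨e', v'⟩ hev' heq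
        obtain ⟨-, hreach, hne⟩ := (Finset.mem_filter.mp hev).2
        obtain ⟨-, hreach', hne'⟩ := (Finset.mem_filter.mp hev').2
        simp only [Prod.mk.injEq] at heq
        obtain ⟨rfl, hlast⟩ := heq
        have h1 : G.canon (G.t e) v ≠ [] := G.canon_ne_nil hreach (fun h => hne h.symm)
        have h2 : G.canon (G.t e) v' ≠ [] := G.canon_ne_nil hreach' (fun h => hne' h.symm)
        rw [List.getLast?_eq_getLast h1, List.getLast?_eq_getLast h2] at hlast
        have hv : G.t ((G.canon (G.t e) v).getLast h1) = v :=
          G.isPath_getLast (G.canon_isPath hreach) h1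
        have hv' : G.t ((G.canon (G.t e) v').getLast h2) = v' :=
          G.isPath_getLast (G.canon_isPath hreach') h2
        have : (G.canon (G.t e) v).getLast h1 = (G.canon (G.t e) v').getLast h2 :=
          Option.some_injective _ hlast
        rw [Prod.mk.injEq]
        exact ⟨rfl, by rw [← hv, ← hv', this]⟩
    simpa [Finset.card_product, Fintype.card_option] using this

lemma opList_length_le : G.opList.length ≤
    min (Fintype.card G.V ^ 2) (Fintype.card G.E) *
      min (Fintype.card G.V) (Fintype.card G.E + 1) := by
  have h1 : G.opList.length = G.buildPairs.card := by
    rw [opList, List.length_map, buildList,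
      (List.perm_insertionSort G.bKeyLe _).length_eq, Finset.length_toList]
  rw [h1]
  exact le_trans G.buildPairs_card_le (Nat.mul_le_mul_right _ G.reps_card_le)

end OrientedGraph

/-- Theorem (upper bound on multiplication rank):
`ν(G) ≤ min(|V|², |E|) · min(|V|, |E| + 1)`. -/
theorem nu_upper_bound (G : OrientedGraph) :
    G.nu ≤ ((min (Fintype.card G.V ^ 2) (Fintype.card G.E) *
      min (Fintype.card G.V) (Fintype.card G.E + 1) : ℕ) : ℕ∞) := by
  have h1 : G.nu ≤ G.mRel G.mySystem :=
    sInf_le ⟨G.mySystem, G.mySystem_complete, rfl⟩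
  have h2 : G.mRel G.mySystem ≤ G.mCost G.baseSet G.Sfin :=
    sInf_le ⟨G.Sfin, G.relSet_subset, rfl⟩
  have h3 := G.mCost_le
  have h4 : (G.opList.length : ℕ∞) ≤
      ((min (Fintype.card G.V ^ 2) (Fintype.card G.E) *
        min (Fintype.card G.V) (Fintype.card G.E + 1) : ℕ) : ℕ∞) :=
    Nat.cast_le.mpr G.opList_length_le
  exact h1.trans (h2.trans (h3.trans h4))
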